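/- Let $0\le\alpha<p$, $0\le\mu<1$, $0\le\delta\le1$, $-1\le B<A\le1$, $p\in\mathbb{N}$, and set $c_k = \frac{[(1-B)(k-p)+(A-B)(p-\alpha)](1-\mu)^{k-p}\Gamma(k+\delta)}{\Gamma(p+\delta)(A-B)(p-\alpha)}$ for $k \ge p+1$. Assume $c_{k+1}>c_k>1$ for all $k\ge p+1$. Let $f(z)=z^p-\sum_{k=p+1}^\infty a_k z^k$ with $a_k\ge0$ and $\sum_{k=p+1}^\infty c_k a_k\le 1$, and let $f_m(z)=z^p-\sum_{k=p+1}^{m+p-1} a_k z^k$ be a partial sum. Then for all $z$ in the open unit disc, $\operatorname{Re}\left(\frac{f(z)}{f_m(z)}\right) \ge 1 - \frac{1}{c_{m+p}}$. -/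
import Mathlib

set_option maxHeartbeats 1000000


theorem stmt9 (p m : ℕ) (hp : 1 ≤ p) (hm : 1 ≤ m) (α μ δ A B : ℝ)
    (hα0 : 0 ≤ α) (hαp : α < p) (hμ0 : 0 ≤ μ) (hμ1 : μ < 1)
    (hδ0 : 0 ≤ δ) (hδ1 : δ ≤ 1) (hB : -1 ≤ B) (hBA : B < A) (hA : A ≤ 1)
    (c : ℕ → ℝ)
    (hc : ∀ k, c k =
      ((1 - B) * ((k : ℝ) - p) + (A - B) * ((p : ℝ) - α)) * (1 - μ) ^ (k - p) *
        Real.Gamma ((k : ℝ) + δ) / (Real.Gamma ((p : ℝ) + δ) * ((A - B) * ((p : ℝ) - α))))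
    (hc1 : ∀ k, p + 1 ≤ k → 1 < c k)
    (hcmono : ∀ k, p + 1 ≤ k → c k < c (k + 1))
    (a : ℕ → ℝ) (ha0 : ∀ k, 0 ≤ a k) (haz : ∀ k, k < p + 1 → a k = 0)
    (hsum : Summable (fun k : ℕ => c k * a k))
    (hle : (∑' k : ℕ, c k * a k) ≤ 1)
    (f fm : ℂ → ℂ)
    (hf : ∀ z : ℂ, f z = z ^ p - ∑' k : ℕ, (a k : ℂ) * z ^ k)
    (hfm : ∀ z : ℂ, fm z = z ^ p - ∑ k ∈ Finset.Ico (p + 1) (m + p), (a k : ℂ) * z ^ k) :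
    ∀ z : ℂ, ‖z‖ < 1 → z ≠ 0 → 1 - 1 / c (m + p) ≤ (f z / fm z).re := by
  intro z hz1 hz0
  set N := m + p with hN
  have hpN : p + 1 ≤ N := by omega
  have hcN1 : 1 < c N := hc1 N hpN
  have hcN0 : (0:ℝ) < c N := by linarith
  have hle' : ∀ k, a k ≤ c k * a k := by
    intro k
    rcases lt_or_ge k (p+1) with h | h
    · simp [haz k h]
    · nlinarith [hc1 k h, ha0 k]
  have hsa : Summable a := Summable.of_nonneg_of_le ha0 hle' hsum
  have hmonoN : ∀ j, N ≤ j → c N ≤ c j := by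
    intro j hj
    induction j, hj using Nat.le_induction with
    | base => exact le_refl _
    | succ n hn ih => exact ih.trans (hcmono n (hpN.trans hn)).le
  set A1 := ∑ k ∈ Finset.Ico (p+1) N, a k with hA1
  set A2 := ∑' k : ℕ, a (k + N) with hA2
  have hA2sum : Summable (fun k => a (k + N)) := (summable_nat_add_iff N).2 hsa
  have hA2nn : 0 ≤ A2 := tsum_nonneg (fun k => ha0 _)
  have hA1nn : 0 ≤ A1 := Finset.sum_nonneg (fun k _ => ha0 k)
  have htail : Summable (fun k => c (k + N) * a (k + N)) := (summable_nat_add_iff N).2 hsum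
  have key : A1 + c N * A2 ≤ 1 := by
    have hsplit := Summable.sum_add_tsum_nat_add (f := fun k => c k * a k) N hsum
    have h2 : A1 ≤ ∑ k ∈ Finset.range N, c k * a k := by
      have e1 : A1 = ∑ k ∈ Finset.range N, a k := by
        rw [hA1]
        apply Finset.sum_subset
        · intro x hx
          simp only [Finset.mem_Ico] at hx
          exact Finset.mem_range.2 hx.2
        · intro x hx hx'
          simp only [Finset.mem_range] at hx
          simp only [Finset.mem_Ico, not_and, not_le] at hx'
          exact haz x (by omega)
      rw [e1]
      exact Finset.sum_le_sum (fun k _ => hle' k)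
    have h3 : c N * A2 ≤ ∑' k : ℕ, c (k + N) * a (k + N) := by
      rw [hA2, ← tsum_mul_left]
      exact Summable.tsum_le_tsum
        (fun k => mul_le_mul_of_nonneg_right (hmonoN (k+N) (Nat.le_add_left _ _)) (ha0 _))
        (hA2sum.mul_left _) htail
    linarith
  set r := ‖z‖ with hr
  have hr0 : (0:ℝ) < r := norm_pos_iff.2 hz0
  have hr1 : r < 1 := hz1
  set g : ℕ → ℂ := fun k => (a k : ℂ) * z ^ k with hg
  have hgeq : ∀ k, ‖g k‖ = a k * r ^ k := by
    intro k
    rw [hg]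
    simp only [norm_mul, norm_pow, Complex.norm_real]
    rw [Real.norm_of_nonneg (ha0 k)]
  have hgn : ∀ k, ‖g k‖ ≤ a k := by
    intro k
    rw [hgeq k]
    have h1 : r ^ k ≤ 1 := pow_le_one₀ hr0.le hr1.le
    nlinarith [ha0 k]
  have hgnorm_sum : Summable (fun k => ‖g k‖) :=
    Summable.of_nonneg_of_le (fun k => norm_nonneg _) hgn hsa
  have hgsum : Summable g := hgnorm_sum.of_norm
  set T := ∑' k : ℕ, g (k + N) with hT
  have hgtail : Summable (fun k => g (k + N)) := (summable_nat_add_iff N).2 hgsum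
  have hgtailnorm : Summable (fun k => ‖g (k + N)‖) := (summable_nat_add_iff N).2 hgnorm_sum
  have e2 : ∑ k ∈ Finset.Ico (p+1) N, (a k : ℂ) * z ^ k = ∑ k ∈ Finset.range N, g k := by
    apply Finset.sum_subset
    · intro x hx
      simp only [Finset.mem_Ico] at hx
      exact Finset.mem_range.2 hx.2
    · intro x hx hx'
      simp only [Finset.mem_range] at hx
      simp only [Finset.mem_Ico, not_and, not_le] at hx'
      have : a x = 0 := haz x (by omega)
      simp [hg, this]
  have hsplitC : f z = fm z - T := by
    rw [hf, hfm, hT]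
    have h5 := Summable.sum_add_tsum_nat_add (f := g) N hgsum
    rw [← h5, ← e2]
    ring
  have hTnorm : ‖T‖ ≤ A2 * r ^ (p+1) := by
    have h6 : ‖T‖ ≤ ∑' k : ℕ, ‖g (k + N)‖ := norm_tsum_le_tsum_norm hgtailnorm
    have h7 : ∑' k : ℕ, ‖g (k + N)‖ ≤ ∑' k : ℕ, a (k + N) * r ^ (p+1) := by
      apply Summable.tsum_le_tsum _ hgtailnorm (hA2sum.mul_right _)
      intro k
      rw [hgeq]
      exact mul_le_mul_of_nonneg_left
        (pow_le_pow_of_le_one hr0.le hr1.le (by omega)) (ha0 _)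
    rw [tsum_mul_right] at h7
    linarith
  set S1 := ∑ k ∈ Finset.Ico (p+1) N, (a k : ℂ) * z ^ k with hS1
  have hS1norm : ‖S1‖ ≤ A1 * r ^ (p+1) := by
    calc ‖S1‖ ≤ ∑ k ∈ Finset.Ico (p+1) N, ‖(a k:ℂ) * z^k‖ := norm_sum_le _ _
    _ ≤ ∑ k ∈ Finset.Ico (p+1) N, a k * r^(p+1) := by
        apply Finset.sum_le_sum
        intro k hk
        simp only [Finset.mem_Ico] at hk
        have : ‖(a k:ℂ) * z^k‖ = a k * r ^ k := hgeq k
        rw [this]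
        exact mul_le_mul_of_nonneg_left
          (pow_le_pow_of_le_one hr0.le hr1.le hk.1) (ha0 _)
    _ = A1 * r^(p+1) := by rw [hA1, Finset.sum_mul]
  have hfmz : fm z = z^p - S1 := by rw [hfm]
  have hfmlow : r^p - A1 * r^(p+1) ≤ ‖fm z‖ := by
    rw [hfmz]
    have h := norm_sub_norm_le (z^p) S1
    rw [norm_pow] at h
    linarith
  have hA1le1 : A1 ≤ 1 := by nlinarith
  have hD : 0 < r^p - A1 * r^(p+1) := by
    rw [pow_succ]
    nlinarith [pow_pos hr0 p, mul_pos (pow_pos hr0 p) hr0,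
      mul_le_mul_of_nonneg_right hA1le1 (mul_pos (pow_pos hr0 p) hr0).le,
      mul_lt_mul_of_pos_left hr1 (pow_pos hr0 p)]
  have hfmne : fm z ≠ 0 := by
    intro h
    rw [h, norm_zero] at hfmlow
    linarith
  have hratio : f z / fm z = 1 - T / fm z := by
    rw [hsplitC, sub_div, div_self hfmne]
  rw [hratio]
  have hre : (1 - T / fm z).re = 1 - (T / fm z).re := by simp
  rw [hre]
  have h8 : (T / fm z).re ≤ ‖T / fm z‖ := Complex.re_le_norm _
  have h9 : ‖T / fm z‖ ≤ (A2 * r^(p+1)) / (r^p - A1*r^(p+1)) := by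
    rw [norm_div]
    exact div_le_div₀ (by positivity) hTnorm hD hfmlow
  have h10 : (A2 * r^(p+1)) / (r^p - A1*r^(p+1)) ≤ 1 / c N := by
    rw [div_le_div_iff₀ hD hcN0]
    have hps : r^(p+1) = r^p * r := pow_succ r p
    have hk := mul_le_mul_of_nonneg_right key (le_of_lt (mul_pos (pow_pos hr0 p) hr0))
    have hk2 : r^p * r ≤ r^p := by nlinarith [pow_pos hr0 p]
    nlinarith [pow_pos hr0 p]
  linarith
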